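/- Let M = {(a_i,b_i) : i = 1,…,n} be a max-sum matching of a set P of 2n points in the plane, and let c ∉ P be a point such that b_1 belongs to the interior of the segment a_1c. Then M* = (M \ {(a_1,b_1)}) ∪ {(a_1,c)} is a max-sum matching of the point set (P \ {b_1}) ∪ {c}. -/
import Mathlib


noncomputable section

/-- Points of the plane with the Euclidean norm. -/
abbrev Pt : Type := EuclideanSpace ℝ (Fin 2)

/-- The closed disk with diameter the segment `pq`: center `(p+q)/2`, radius `‖p-q‖/2`. -/
def disk (p q : Pt) : Set Pt := Metric.closedBall (midpoint ℝ p q) (dist p q / 2)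


/-- A fixed-point-free involution of the index set: a perfect matching of the indices. -/
def IsPairing {m : ℕ} (σ : Equiv.Perm (Fin m)) : Prop := ∀ i, σ i ≠ i ∧ σ (σ i) = i

/-- Twice the total Euclidean length of the matching induced by the pairing `σ`. -/
def matchCost {m : ℕ} (x : Fin m → Pt) (σ : Equiv.Perm (Fin m)) : ℝ :=
  ∑ i, dist (x i) (x (σ i))

/-- The pairing `σ` is a max-sum matching of the points `x 0, …, x (m-1)`. -/
def IsMaxSumMatching {m : ℕ} (x : Fin m → Pt) (σ : Equiv.Perm (Fin m)) : Prop :=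
  IsPairing σ ∧ ∀ τ : Equiv.Perm (Fin m), IsPairing τ → matchCost x τ ≤ matchCost x σ

/-- Extending a segment of a max-sum matching beyond one of its endpoints yields a
max-sum matching of the new point set. -/
theorem stmt7 (n : ℕ) (x : Fin (2 * n) → Pt) (σ : Equiv.Perm (Fin (2 * n)))
    (hmax : IsMaxSumMatching x σ) (i₀ : Fin (2 * n)) (c : Pt)
    (hc : ∀ i, x i ≠ c) (hb : x (σ i₀) ∈ openSegment ℝ (x i₀) c) :
    IsMaxSumMatching (Function.update x (σ i₀) c) σ := by
  obtain ⟨hpair, hmaxcost⟩ := hmax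
  set j₀ := σ i₀ with hj
  set d := dist (x j₀) c with hd
  have hij : j₀ ≠ i₀ := (hpair i₀).1
  have hσj : σ j₀ = i₀ := (hpair i₀).2
  have hcol : dist (x i₀) (x j₀) + dist (x j₀) c = dist (x i₀) c :=
    dist_add_dist_of_mem_segment (openSegment_subset_segment ℝ _ _ hb)
  set x' := Function.update x j₀ c with hx'
  have hx'j : x' j₀ = c := Function.update_self _ _ _
  have hx'ne : ∀ i, i ≠ j₀ → x' i = x i := fun i h => Function.update_of_ne h _ _
  have hdistp : ∀ p, dist (x' p) (x p) ≤ (if p = j₀ then d else 0) := by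
    intro p
    by_cases h : p = j₀
    · subst h; simp [hx'j, hd, dist_comm]
    · simp [hx'ne p h, h]
  have hsum : ∀ τ : Equiv.Perm (Fin (2 * n)), matchCost x' τ ≤ matchCost x τ + 2 * d := by
    intro τ
    have h1 : matchCost x' τ ≤
        ∑ i, (dist (x i) (x (τ i)) + ((if i = j₀ then d else 0)
          + (if τ i = j₀ then d else 0))) := by
      refine Finset.sum_le_sum fun i _ => ?_
      calc dist (x' i) (x' (τ i))
          ≤ dist (x' i) (x i) + dist (x i) (x (τ i)) + dist (x (τ i)) (x' (τ i)) :=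
            dist_triangle4 _ _ _ _
        _ ≤ (if i = j₀ then d else 0) + dist (x i) (x (τ i)) + (if τ i = j₀ then d else 0) := by
            have h2 := hdistp i
            have h3 := hdistp (τ i)
            rw [dist_comm (x (τ i))]
            gcongr
        _ = dist (x i) (x (τ i)) + ((if i = j₀ then d else 0) + (if τ i = j₀ then d else 0)) :=
            by ring
    have h4 : (∑ i, (if i = j₀ then d else 0) : ℝ) = d := by
      simp
    have h5 : (∑ i, (if τ i = j₀ then d else 0) : ℝ) = d := by
      rw [Equiv.sum_comp τ (fun i => if i = j₀ then d else 0)]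
      simp
    calc matchCost x' τ ≤ _ := h1
      _ = matchCost x τ + ((∑ i, (if i = j₀ then d else 0))
            + (∑ i, (if τ i = j₀ then d else 0))) := by
          rw [matchCost, Finset.sum_add_distrib, Finset.sum_add_distrib]
      _ = matchCost x τ + 2 * d := by rw [h4, h5]; ring
  have heq : matchCost x' σ = matchCost x σ + 2 * d := by
    have hterm : ∀ i, dist (x' i) (x' (σ i)) =
        dist (x i) (x (σ i)) + ((if i = i₀ then d else 0) + (if i = j₀ then d else 0)) := by
      intro i
      by_cases h1 : i = i₀
      · subst h1
        rw [hx'ne _ (Ne.symm hij), ← hj, hx'j, if_pos rfl, if_neg (Ne.symm hij)]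
        linarith [hcol]
      · by_cases h2 : i = j₀
        · subst h2
          rw [hσj, hx'j, hx'ne _ (Ne.symm hij), if_neg h1, if_pos rfl,
            dist_comm c, dist_comm (x j₀)]
          linarith [hcol]
        · have h3 : σ i ≠ j₀ := by
            intro h
            apply h1
            have := (hpair i).2
            rw [h, hσj] at this
            exact this.symm
          rw [hx'ne i h2, hx'ne (σ i) h3, if_neg h1, if_neg h2]
          ring
    rw [matchCost, matchCost]
    simp_rw [hterm]
    rw [Finset.sum_add_distrib, Finset.sum_add_distrib]
    have h4 : (∑ i, (if i = i₀ then d else 0) : ℝ) = d := by simp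
    have h5 : (∑ i, (if i = j₀ then d else 0) : ℝ) = d := by simp
    rw [h4, h5]; ring
  refine ⟨hpair, fun τ hτ => ?_⟩
  calc matchCost x' τ ≤ matchCost x τ + 2 * d := hsum τ
    _ ≤ matchCost x σ + 2 * d := by linarith [hmaxcost τ hτ]
    _ = matchCost x' σ := heq.symm
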